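/- Let $V = \{x_i\}_{i\ge 1}$ with $0 < x_1 < x_2 < \cdots$, and let $\mathscr{H}_V$ be the RKHS of the restricted Brownian motion kernel $k(x_i, x_j) = \min(x_i, x_j)$ on $V \times V$. Then for each $i \ge 2$, $\delta_{x_i} \in \mathscr{H}_V$, the point mass lies in the span of $k_{x_{i-1}}, k_{x_i}, k_{x_{i+1}}$, and $\|\delta_{x_i}\|_{\mathscr{H}_V}^2 = \frac{x_{i+1} - x_{i-1}}{(x_i - x_{i-1})(x_{i+1} - x_i)}$. For $i = 1$: $\delta_{x_1} = \frac{x_2}{x_1(x_2 - x_1)} k_{x_1} - \frac{1}{x_2 - x_1} k_{x_2}$ and $\|\delta_{x_1}\|_{\mathscr{H}_V}^2 = \frac{x_2}{x_1 (x_2 - x_1)}$. -/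

import Mathlib

/-- Let `V = {x₀ < x₁ < ⋯} ⊂ (0,∞)` and let `H` be the RKHS of
the restricted Brownian motion kernel `k (xᵢ, xⱼ) = min (xᵢ, xⱼ)` (modeled
abstractly: kernel vectors `K i` with `⟪K i, K j⟫ = min (x i) (x j)` and dense
span; the point mass `δ_{xᵢ}` belongs to `H` iff some `g ∈ H` satisfies
`⟪K j, g⟫ = δ_{ij}`). Then (interior points, `i ≥ 1` in 0-based indexing):
`δ_{xᵢ} ∈ H`, it lies in `span {K (i-1), K i, K (i+1)}`, and
`‖δ_{xᵢ}‖² = (x_{i+1} - x_{i-1}) / ((xᵢ - x_{i-1})(x_{i+1} - xᵢ))`;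
and for the first point:
`δ_{x₀} = (x₁ / (x₀ (x₁ - x₀))) • K 0 - (1/(x₁ - x₀)) • K 1`, with
`‖δ_{x₀}‖² = x₁ / (x₀ (x₁ - x₀))`. -/
theorem stmt_17 {H : Type*} [NormedAddCommGroup H] [InnerProductSpace ℝ H]
    [CompleteSpace H]
    (x : ℕ → ℝ) (h0 : 0 < x 0) (hmono : StrictMono x)
    (K : ℕ → H)
    (hk : ∀ i j : ℕ, (inner ℝ (K i) (K j) : ℝ) = min (x i) (x j))
    (hdense : (Submodule.span ℝ (Set.range K)).topologicalClosure = ⊤) :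
    (∀ i : ℕ, 1 ≤ i →
      ∃ g : H, (∀ j : ℕ, (inner ℝ (K j) g : ℝ) = if j = i then 1 else 0) ∧
        g ∈ Submodule.span ℝ ({K (i - 1), K i, K (i + 1)} : Set H) ∧
        ‖g‖ ^ 2 = (x (i + 1) - x (i - 1)) /
          ((x i - x (i - 1)) * (x (i + 1) - x i))) ∧
    ((∀ j : ℕ,
        (inner ℝ (K j) ((x 1 / (x 0 * (x 1 - x 0))) • K 0
            - (1 / (x 1 - x 0)) • K 1) : ℝ) = if j = 0 then 1 else 0) ∧
      ‖(x 1 / (x 0 * (x 1 - x 0))) • K 0 - (1 / (x 1 - x 0)) • K 1‖ ^ 2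
        = x 1 / (x 0 * (x 1 - x 0))) := by

  have hxm : ∀ i j : ℕ, i ≤ j → min (x i) (x j) = x i := fun i j h =>
    min_eq_left (hmono.monotone h)
  have hxm' : ∀ i j : ℕ, j ≤ i → min (x i) (x j) = x j := fun i j h =>
    min_eq_right (hmono.monotone h)
  constructor
  · intro i hi
    obtain ⟨p, rfl⟩ : ∃ p, i = p + 1 := ⟨i - 1, (Nat.succ_pred_eq_of_pos hi).symm⟩
    have h1 : x p < x (p + 1) := hmono (by omega)
    have h2 : x (p + 1) < x (p + 2) := hmono (by omega)
    have d1 : x (p + 1) - x p ≠ 0 := by linarith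
    have d2 : x (p + 2) - x (p + 1) ≠ 0 := by linarith
    set a : ℝ := -(x (p + 1) - x p)⁻¹ with ha
    set c : ℝ := -(x (p + 2) - x (p + 1))⁻¹ with hc
    set b : ℝ := (x (p + 2) - x p) / ((x (p + 1) - x p) * (x (p + 2) - x (p + 1))) with hb
    refine ⟨a • K p + b • K (p + 1) + c • K (p + 2), ?_, ?_, ?_⟩
    · intro j
      rw [inner_add_right, inner_add_right, real_inner_smul_right,
        real_inner_smul_right, real_inner_smul_right, hk, hk, hk]
      rcases le_or_gt j p with hj | hj
      · rw [hxm j p hj, hxm j (p+1) (by omega), hxm j (p+2) (by omega)]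
        rw [if_neg (by omega)]
        rw [ha, hb, hc]
        field_simp [ha, hb, hc]
        ring
      · rcases eq_or_lt_of_le (show p + 1 ≤ j from hj) with hj' | hj'
        · subst hj'
          rw [hxm' (p+1) p (by omega), min_self, hxm (p+1) (p+2) (by omega)]
          rw [if_pos rfl]
          rw [ha, hb, hc]
          field_simp [ha, hb, hc]
          ring
        · have hj2 : p + 2 ≤ j := by omega
          rw [hxm' j p (by omega), hxm' j (p+1) (by omega), hxm' j (p+2) hj2]
          rw [if_neg (by omega)]
          rw [ha, hb, hc]
          field_simp [ha, hb, hc]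
          ring
    · simp only [Nat.add_sub_cancel]
      refine Submodule.add_mem _ (Submodule.add_mem _ ?_ ?_) ?_ <;>
        exact Submodule.smul_mem _ _ (Submodule.subset_span (by simp))
    · have key : ∀ j, (inner ℝ (K j) (a • K p + b • K (p + 1) + c • K (p + 2)) : ℝ)
          = if j = p + 1 then 1 else 0 := by
        intro j
        rw [inner_add_right, inner_add_right, real_inner_smul_right,
          real_inner_smul_right, real_inner_smul_right, hk, hk, hk]
        rcases le_or_gt j p with hj | hj
        · rw [hxm j p hj, hxm j (p+1) (by omega), hxm j (p+2) (by omega)]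
          rw [if_neg (by omega)]
          rw [ha, hb, hc]
          field_simp [ha, hb, hc]
          ring
        · rcases eq_or_lt_of_le (show p + 1 ≤ j from hj) with hj' | hj'
          · subst hj'
            rw [hxm' (p+1) p (by omega), min_self, hxm (p+1) (p+2) (by omega)]
            rw [if_pos rfl]
            rw [ha, hb, hc]
            field_simp [ha, hb, hc]
            ring
          · have hj2 : p + 2 ≤ j := by omega
            rw [hxm' j p (by omega), hxm' j (p+1) (by omega), hxm' j (p+2) hj2]
            rw [if_neg (by omega)]
            rw [ha, hb, hc]
            field_simp [ha, hb, hc]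
            ring
      rw [← real_inner_self_eq_norm_sq, inner_add_left, inner_add_left,
        real_inner_smul_left, real_inner_smul_left, real_inner_smul_left,
        key p, key (p+1), key (p+2)]
      simp only [Nat.add_sub_cancel]
      norm_num [hb]
  · have h1 : x 0 < x 1 := hmono (by omega)
    have d0 : x 0 ≠ 0 := ne_of_gt h0
    have d1 : x 1 - x 0 ≠ 0 := by linarith
    have key : ∀ j : ℕ, (inner ℝ (K j) ((x 1 / (x 0 * (x 1 - x 0))) • K 0
        - (1 / (x 1 - x 0)) • K 1) : ℝ) = if j = 0 then 1 else 0 := by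
      intro j
      rw [inner_sub_right, real_inner_smul_right, real_inner_smul_right, hk, hk]
      rcases Nat.eq_zero_or_pos j with hj | hj
      · subst hj
        rw [min_self, hxm 0 1 (by omega)]
        rw [if_pos rfl]
        field_simp
      · rw [hxm' j 0 (by omega), hxm' j 1 hj]
        rw [if_neg (by omega)]
        field_simp
        ring
    refine ⟨key, ?_⟩
    rw [← real_inner_self_eq_norm_sq, inner_sub_left, real_inner_smul_left,
      real_inner_smul_left, key 0, key 1]
    norm_num
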